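/- For every integer p ≥ 3 and all x in (0, π/2), (4/π²)(1 - cosh(π/2)/cosh(π/(2p))) < (1 - cosh(x)/cosh(x/p))/x² < (1 - p²)/(2p²). -/

import Mathlib

open Real Set

set_option maxHeartbeats 1000000

lemma mono_aux {f F : ℝ → ℝ} (hd : ∀ y, HasDerivAt f (F y) y)
    (hF : ∀ y, 0 ≤ y → 0 ≤ F y) : MonotoneOn f (Set.Ici 0) := by
  apply monotoneOn_of_deriv_nonneg (convex_Ici 0)
  · exact fun y _ => ((hd y).differentiableAt.continuousAt).continuousWithinAt
  · exact fun y _ => (hd y).differentiableAt.differentiableWithinAt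
  · intro y hy
    rw [interior_Ici, mem_Ioi] at hy
    rw [(hd y).deriv]
    exact hF y hy.le

lemma nonneg_aux {f F : ℝ → ℝ} (hf0 : f 0 = 0) (hd : ∀ y, HasDerivAt f (F y) y)
    (hF : ∀ y, 0 ≤ y → 0 ≤ F y) : ∀ x, 0 ≤ x → 0 ≤ f x := fun x hx =>
  hf0 ▸ mono_aux hd hF Set.self_mem_Ici hx hx

lemma pos_aux {b : ℝ} (hb : 0 < b) {f F : ℝ → ℝ} (hf0 : f 0 = 0)
    (hd : ∀ y, HasDerivAt f (F y) y) (hF : ∀ y, y ∈ Set.Ioo 0 b → 0 < F y) :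
    ∀ x, x ∈ Set.Ioc 0 b → 0 < f x := by
  have hm : StrictMonoOn f (Set.Icc 0 b) := by
    apply strictMonoOn_of_deriv_pos (convex_Icc 0 b)
    · exact fun y _ => ((hd y).differentiableAt.continuousAt).continuousWithinAt
    · intro y hy
      rw [interior_Icc] at hy
      rw [(hd y).deriv]
      exact hF y hy
  intro x hx
  have := hm (Set.left_mem_Icc.2 hb.le) ⟨hx.1.le, hx.2⟩ hx.1
  rwa [hf0] at this



lemma T1 : ∀ x : ℝ, 0 ≤ x → sinh x ≤ x * cosh x := by
  have := nonneg_aux (f := fun y => y * cosh y - sinh y) (F := fun y => y * sinh y)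
    (by simp) (fun y => by
      have h := ((hasDerivAt_id y).mul (Real.hasDerivAt_cosh y)).sub (Real.hasDerivAt_sinh y)
      convert h using 1 <;> try rfl
      simp only [id_eq]; try ring)
    (fun y hy => mul_nonneg hy (by simpa using hy))
  intro x hx; have h := this x hx; linarith

lemma T2 : ∀ x : ℝ, 0 ≤ x → cosh x - 1 ≤ x^2/2 * cosh x := by
  have := nonneg_aux (f := fun y => y^2/2 * cosh y + 1 - cosh y)
    (F := fun y => y * cosh y + y^2/2 * sinh y - sinh y)
    (by simp) (fun y => by
      have h := (((((hasDerivAt_pow 2 y).div_const 2).mul (Real.hasDerivAt_cosh y)).add_const 1).sub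
        (Real.hasDerivAt_cosh y))
      convert h using 1 <;> try rfl
      try ring)
    (fun y hy => by
      have := T1 y hy
      have : 0 ≤ y^2/2 * sinh y := by positivity
      nlinarith [T1 y hy])
  intro x hx; have h := this x hx; linarith

lemma T3 : ∀ x : ℝ, 0 ≤ x → sinh x - x ≤ x^3/6 * cosh x := by
  have := nonneg_aux (f := fun y => y^3/6 * cosh y + y - sinh y)
    (F := fun y => y^2/2 * cosh y + y^3/6 * sinh y + 1 - cosh y)
    (by simp) (fun y => by
      have h := ((((((hasDerivAt_pow 3 y).div_const 6).mul (Real.hasDerivAt_cosh y)).add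
        (hasDerivAt_id y))).sub (Real.hasDerivAt_sinh y))
      convert h using 1 <;> try rfl
      try ring)
    (fun y hy => by
      have h2 := T2 y hy
      have : 0 ≤ y^3/6 * sinh y := by positivity
      nlinarith)
  intro x hx; have h := this x hx; linarith

lemma T4 : ∀ x : ℝ, 0 ≤ x → cosh x - 1 - x^2/2 ≤ x^4/24 * cosh x := by
  have := nonneg_aux (f := fun y => y^4/24 * cosh y + 1 + y^2/2 - cosh y)
    (F := fun y => y^3/6 * cosh y + y^4/24 * sinh y + y - sinh y)
    (by simp) (fun y => by
      have h := (((((hasDerivAt_pow 4 y).div_const 24).mul (Real.hasDerivAt_cosh y)).add_const 1).add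
        ((hasDerivAt_pow 2 y).div_const 2)).sub (Real.hasDerivAt_cosh y)
      convert h using 1 <;> try rfl
      try ring)
    (fun y hy => by
      have h3 := T3 y hy
      have : 0 ≤ y^4/24 * sinh y := by positivity
      nlinarith)
  intro x hx; have h := this x hx; linarith

lemma T5 : ∀ x : ℝ, 0 ≤ x → sinh x - x - x^3/6 ≤ x^5/120 * cosh x := by
  have := nonneg_aux (f := fun y => y^5/120 * cosh y + y + y^3/6 - sinh y)
    (F := fun y => y^4/24 * cosh y + y^5/120 * sinh y + 1 + y^2/2 - cosh y)
    (by simp) (fun y => by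
      have h := (((((hasDerivAt_pow 5 y).div_const 120).mul (Real.hasDerivAt_cosh y)).add
        (hasDerivAt_id y)).add ((hasDerivAt_pow 3 y).div_const 6)).sub (Real.hasDerivAt_sinh y)
      convert h using 1 <;> try rfl
      try ring)
    (fun y hy => by
      have h4 := T4 y hy
      have : 0 ≤ y^5/120 * sinh y := by positivity
      nlinarith)
  intro x hx; have h := this x hx; linarith

lemma T6 : ∀ x : ℝ, 0 ≤ x → cosh x - 1 - x^2/2 - x^4/24 ≤ x^6/720 * cosh x := by
  have := nonneg_aux (f := fun y => y^6/720 * cosh y + 1 + y^2/2 + y^4/24 - cosh y)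
    (F := fun y => y^5/120 * cosh y + y^6/720 * sinh y + y + y^3/6 - sinh y)
    (by simp) (fun y => by
      have h := ((((((hasDerivAt_pow 6 y).div_const 720).mul (Real.hasDerivAt_cosh y)).add_const 1).add
        ((hasDerivAt_pow 2 y).div_const 2)).add ((hasDerivAt_pow 4 y).div_const 24)).sub
        (Real.hasDerivAt_cosh y)
      convert h using 1 <;> try rfl
      try ring
    )
    (fun y hy => by
      have h5 := T5 y hy
      have : 0 ≤ y^6/720 * sinh y := by positivity
      nlinarith)
  intro x hx; have h := this x hx; linarith

lemma S2 : ∀ x : ℝ, 0 ≤ x → 1 + x^2/2 ≤ cosh x := by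
  have := nonneg_aux (f := fun y => cosh y - 1 - y^2/2)
    (F := fun y => sinh y - y)
    (by simp) (fun y => by
      have h := ((Real.hasDerivAt_cosh y).sub_const 1).sub ((hasDerivAt_pow 2 y).div_const 2)
      convert h using 1 <;> try rfl
      try ring)
    (fun y hy => by simpa using Real.self_le_sinh_iff.2 hy)
  intro x hx; have h := this x hx; linarith

lemma S3 : ∀ x : ℝ, 0 ≤ x → x + x^3/6 ≤ sinh x := by
  have := nonneg_aux (f := fun y => sinh y - y - y^3/6)
    (F := fun y => cosh y - 1 - y^2/2)
    (by simp) (fun y => by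
      have h := (((Real.hasDerivAt_sinh y).sub (hasDerivAt_id y)).sub ((hasDerivAt_pow 3 y).div_const 6))
      convert h using 1 <;> try rfl
      try ring)
    (fun y hy => by linarith [S2 y hy])
  intro x hx; have h := this x hx; linarith

lemma S4 : ∀ x : ℝ, 0 ≤ x → 1 + x^2/2 + x^4/24 ≤ cosh x := by
  have := nonneg_aux (f := fun y => cosh y - 1 - y^2/2 - y^4/24)
    (F := fun y => sinh y - y - y^3/6)
    (by simp) (fun y => by
      have h := (((Real.hasDerivAt_cosh y).sub_const 1).sub ((hasDerivAt_pow 2 y).div_const 2)).sub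
        ((hasDerivAt_pow 4 y).div_const 24)
      convert h using 1 <;> try rfl
      try ring)
    (fun y hy => by linarith [S3 y hy])
  intro x hx; have h := this x hx; linarith

lemma S5 : ∀ x : ℝ, 0 ≤ x → x + x^3/6 + x^5/120 ≤ sinh x := by
  have := nonneg_aux (f := fun y => sinh y - y - y^3/6 - y^5/120)
    (F := fun y => cosh y - 1 - y^2/2 - y^4/24)
    (by simp) (fun y => by
      have h := ((((Real.hasDerivAt_sinh y).sub (hasDerivAt_id y)).sub
        ((hasDerivAt_pow 3 y).div_const 6)).sub ((hasDerivAt_pow 5 y).div_const 120))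
      convert h using 1 <;> try rfl
      try ring)
    (fun y hy => by linarith [S4 y hy])
  intro x hx; have h := this x hx; linarith

lemma Rmono : ∀ y x : ℝ, 0 ≤ y → y ≤ x →
    cosh y - 1 - y^2/2 - y^4/24 ≤ cosh x - 1 - x^2/2 - x^4/24 := by
  intro y x hy hyx
  exact mono_aux (f := fun t => cosh t - 1 - t^2/2 - t^4/24) (F := fun t => sinh t - t - t^3/6)
    (fun t => by
      have h := (((Real.hasDerivAt_cosh t).sub_const 1).sub ((hasDerivAt_pow 2 t).div_const 2)).sub
        ((hasDerivAt_pow 4 t).div_const 24)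
      convert h using 1 <;> try rfl
      try ring)
    (fun t ht => by linarith [S3 t ht]) hy (le_trans hy hyx) hyx


noncomputable def Uf (c : ℝ) : ℝ → ℝ := fun x => cosh x / cosh (c*x)
noncomputable def U1 (c : ℝ) : ℝ → ℝ := fun x =>
  (sinh x * cosh (c*x) - c * cosh x * sinh (c*x)) / cosh (c*x)^2
noncomputable def U2 (c : ℝ) : ℝ → ℝ := fun x =>
  ((1-c^2) * cosh x * cosh (c*x)^2 - 2*c*sinh x*sinh (c*x)*cosh (c*x)
    + 2*c^2*cosh x*sinh (c*x)^2) / cosh (c*x)^3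
noncomputable def U3 (c : ℝ) : ℝ → ℝ := fun x =>
  ((1-3*c^2)*sinh x*cosh (c*x)^3 + 6*c^2*sinh x*sinh (c*x)^2*cosh (c*x)
    - c*(3-5*c^2)*cosh x*sinh (c*x)*cosh (c*x)^2 - 6*c^3*cosh x*sinh (c*x)^3) / cosh (c*x)^4

lemma hCc (c x : ℝ) : HasDerivAt (fun y => cosh (c*y)) (c * sinh (c*x)) x := by
  have h := (Real.hasDerivAt_cosh (c*x)).comp x ((hasDerivAt_id x).const_mul c)
  (convert h using 1 <;> try rfl) <;> { simp [id_eq]; try ring }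

lemma hSc (c x : ℝ) : HasDerivAt (fun y => sinh (c*y)) (c * cosh (c*x)) x := by
  have h := (Real.hasDerivAt_sinh (c*x)).comp x ((hasDerivAt_id x).const_mul c)
  (convert h using 1 <;> try rfl) <;> { simp [id_eq]; try ring }

lemma hU (c x : ℝ) : HasDerivAt (Uf c) (U1 c x) x := by
  have h := (Real.hasDerivAt_cosh x).div (hCc c x) (Real.cosh_pos (c*x)).ne'
  convert h using 1 <;> try rfl
  unfold U1
  have hC := (Real.cosh_pos (c*x)).ne'
  field_simp

lemma hU1 (c x : ℝ) : HasDerivAt (U1 c) (U2 c x) x := by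
  have hC := (Real.cosh_pos (c*x)).ne'
  have h := (((Real.hasDerivAt_sinh x).mul (hCc c x)).sub
      (((Real.hasDerivAt_cosh x).const_mul c).mul (hSc c x))).div
      ((hCc c x).pow 2) (pow_ne_zero 2 hC)
  convert h using 1 <;> try rfl
  unfold U2
  simp only [Pi.pow_apply, Pi.mul_apply, Pi.sub_apply, Pi.add_apply]
  field_simp
  ring

lemma hU2 (c x : ℝ) : HasDerivAt (U2 c) (U3 c x) x := by
  have hC := (Real.cosh_pos (c*x)).ne'
  have t1 := ((Real.hasDerivAt_cosh x).const_mul (1-c^2)).mul ((hCc c x).pow 2)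
  have t2 := (((Real.hasDerivAt_sinh x).const_mul (2*c)).mul (hSc c x)).mul (hCc c x)
  have t3 := ((Real.hasDerivAt_cosh x).const_mul (2*c^2)).mul ((hSc c x).pow 2)
  have h := ((t1.sub t2).add t3).div ((hCc c x).pow 3) (pow_ne_zero 3 hC)
  convert h using 1 <;> try rfl
  unfold U3
  simp only [Pi.pow_apply, Pi.mul_apply, Pi.sub_apply, Pi.add_apply]
  field_simp
  ring



lemma key2 (x : ℝ) (hx0 : 0 < x) (hx1 : x < π/2) : 14 * x * cosh x < 27 * sinh x := by
  have hpi : π < 3.15 := pi_lt_d2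
  have hxb : x < 1.575 := by linarith
  have hx2 : x^2 < 2.480625 := by nlinarith
  have hx4 : x^4 < 6.1535003907 := by nlinarith [sq_nonneg x, pow_pos hx0 2]
  have hx6 : x^6 < 15.2651 := by nlinarith [pow_pos hx0 2, pow_pos hx0 4]
  have ht := T6 x hx0.le
  have hcpos := Real.cosh_pos x
  have hcb : cosh x < 2.6 := by nlinarith
  have hcu : cosh x ≤ 1 + x^2/2 + x^4/24 + 2.6*x^6/720 := by
    nlinarith [mul_le_mul_of_nonneg_left hcb.le (by positivity : (0:ℝ) ≤ x^6/720)]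
  have hs := S5 x hx0.le
  nlinarith [mul_le_mul_of_nonneg_left hcu (by positivity : (0:ℝ) ≤ 14*x),
    mul_nonneg (mul_nonneg hx0.le hx0.le) (sub_nonneg.2 hx2.le),
    mul_nonneg (mul_nonneg (mul_nonneg (mul_nonneg hx0.le hx0.le) hx0.le) hx0.le) (sub_nonneg.2 hx2.le),
    mul_nonneg hx0.le (sub_nonneg.2 hx2.le)]

lemma M3pos (c x : ℝ) (hc0 : 0 < c) (hc3 : c ≤ 1/3) (hx0 : 0 < x) (hx1 : x < π/2) :
    0 < (1-3*c^2)*sinh x*cosh (c*x)^3 + 6*c^2*sinh x*sinh (c*x)^2*cosh (c*x)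
      - c*(3-5*c^2)*cosh x*sinh (c*x)*cosh (c*x)^2 - 6*c^3*cosh x*sinh (c*x)^3 := by
  set C := cosh (c*x) with hCdef
  set S := sinh (c*x) with hSdef
  have hcx0 : 0 < c*x := mul_pos hc0 hx0
  have hC0 : 0 < C := Real.cosh_pos _
  have hS0 : 0 < S := by rw [hSdef]; exact Real.sinh_pos_iff.2 hcx0
  have hid : C^2 - S^2 = 1 := Real.cosh_sq_sub_sinh_sq (c*x)
  have hT1 : S ≤ (c*x)*C := T1 (c*x) hcx0.le
  have hsx : 0 < sinh x := Real.sinh_pos_iff.2 hx0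
  have hcx : 0 < cosh x := Real.cosh_pos x
  have hk2 := key2 x hx0 hx1
  have hc2 : c^2 ≤ 1/9 := by nlinarith
  have hc4 : c^4 ≤ 1/81 := by nlinarith [sq_nonneg c]
  have hb1 : c*(3-5*c^2)*cosh x*S*C^2 + 6*c^3*cosh x*S^3 ≤ c*cosh x*S*C^2*(3+c^2) := by
    nlinarith [hid, mul_pos (mul_pos (mul_pos hc0 (mul_pos hc0 hc0)) hcx) hS0]
  have hb2 : c*cosh x*S*C^2*(3+c^2) ≤ c^2*x*cosh x*C^3*(3+c^2) := by
    have h := mul_le_mul_of_nonneg_left hT1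
      (show 0 ≤ c*cosh x*C^2*(3+c^2) by positivity)
    nlinarith [h]
  have hP : 0 ≤ x*cosh x*C^3 := by positivity
  have hb3 : c^2*x*cosh x*C^3*(3+c^2) ≤ (28/81)*x*cosh x*C^3 := by
    nlinarith [mul_nonneg (sub_nonneg.2 hc2) hP, mul_nonneg (sub_nonneg.2 hc4) hP]
  have hP2 : 0 ≤ sinh x * C^3 := by positivity
  have hd : (2/3)*sinh x*C^3 ≤ (1-3*c^2)*sinh x*C^3 := by
    nlinarith [mul_nonneg (sub_nonneg.2 hc2) hP2]
  have hmain : (28/81)*x*cosh x*C^3 < (2/3)*sinh x*C^3 := by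
    have h := mul_lt_mul_of_pos_right hk2 (pow_pos hC0 3)
    nlinarith [h]
  have hpos : 0 < 6*c^2*sinh x*S^2*C := by positivity
  linarith [hb1, hb2, hb3, hd, hmain, hpos]


lemma U3pos (c : ℝ) (hc0 : 0 < c) (hc3 : c ≤ 1/3) :
    ∀ x ∈ Set.Ioo 0 (π/2), 0 < U3 c x := fun x hx =>
  div_pos (M3pos c x hc0 hc3 hx.1 hx.2) (pow_pos (Real.cosh_pos _) 4)

lemma psi_pos (c : ℝ) (hc0 : 0 < c) (hc3 : c ≤ 1/3) :
    ∀ x ∈ Set.Ioc 0 (π/2), 0 < x * U2 c x - U1 c x := by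
  apply pos_aux (by positivity : (0:ℝ) < π/2) (F := fun y => y * U3 c y)
  · simp [U1, U2]
  · intro y
    have h := ((hasDerivAt_id' (x := y)).mul (hU2 c y)).sub (hU1 c y)
    convert h using 1 <;> try rfl
    ring
  · intro y hy
    exact mul_pos hy.1 (U3pos c hc0 hc3 y hy)

lemma phi_pos (c : ℝ) (hc0 : 0 < c) (hc3 : c ≤ 1/3) :
    ∀ x ∈ Set.Ioc 0 (π/2), 0 < x * U1 c x - 2*(Uf c x - 1) := by
  apply pos_aux (by positivity : (0:ℝ) < π/2)
    (F := fun y => y * U2 c y - U1 c y)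
  · simp [U1, Uf]
  · intro y
    have h := ((hasDerivAt_id' (x := y)).mul (hU1 c y)).sub (((hU c y).sub_const 1).const_mul 2)
    convert h using 1 <;> try rfl
    ring
  · intro y hy
    exact psi_pos c hc0 hc3 y ⟨hy.1, hy.2.le⟩

lemma fmono (c : ℝ) (hc0 : 0 < c) (hc3 : c ≤ 1/3) :
    StrictMonoOn (fun t => (Uf c t - 1)/t^2) (Set.Ioc 0 (π/2)) := by
  apply strictMonoOn_of_deriv_pos (convex_Ioc 0 (π/2))
  · apply ContinuousOn.div
    · apply ContinuousOn.sub _ continuousOn_const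
      exact (Real.continuous_cosh.div (Real.continuous_cosh.comp (continuous_const.mul continuous_id))
        (fun y => (Real.cosh_pos _).ne')).continuousOn
    · exact (continuous_pow 2).continuousOn
    · exact fun t ht => pow_ne_zero 2 (ne_of_gt ht.1)
  · intro t ht
    rw [interior_Ioc] at ht
    have ht0 := ht.1
    have hd : HasDerivAt (fun y => (Uf c y - 1)/y^2)
        ((U1 c t * t^2 - (Uf c t - 1)*(↑2*t^1)) / (t^2)^2) t :=
      ((hU c t).sub_const 1).div (hasDerivAt_pow 2 t) (pow_ne_zero 2 ht0.ne')
    rw [hd.deriv]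
    have heq : (U1 c t * t^2 - (Uf c t - 1)*(↑2*t^1)) / (t^2)^2
        = (t * U1 c t - 2*(Uf c t - 1)) / t^3 := by
      field_simp
    rw [heq]
    exact div_pos (phi_pos c hc0 hc3 t ⟨ht0, ht.2.le⟩) (by positivity)

lemma partB (c x : ℝ) (hc0 : 0 < c) (hc3 : c ≤ 1/3) (hx0 : 0 < x) (hx1 : x < π/2) :
    (1 - cosh (π/2) / cosh (c*(π/2)))/(π/2)^2 < (1 - cosh x / cosh (c*x))/x^2 := by
  have hpi : (0:ℝ) < π/2 := by positivity
  have h := fmono c hc0 hc3 (Set.mem_Ioc.2 ⟨hx0, hx1.le⟩)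
    (Set.mem_Ioc.2 ⟨hpi, le_refl _⟩) hx1
  have e1 : (1 - cosh x / cosh (c*x))/x^2 = -((Uf c x - 1)/x^2) := by unfold Uf; ring
  have e2 : (1 - cosh (π/2) / cosh (c*(π/2)))/(π/2)^2 = -((Uf c (π/2) - 1)/(π/2)^2) := by
    unfold Uf; ring
  rw [e1, e2]
  simpa using neg_lt_neg h



lemma partA (c x : ℝ) (hc0 : 0 < c) (hc3 : c ≤ 1/3) (hx0 : 0 < x) (hx1 : x < π/2) :
    (1 - cosh x / cosh (c*x))/x^2 < (c^2-1)/2 := by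
  have hpi : π < 3.15 := pi_lt_d2
  have hy0 : 0 < c*x := mul_pos hc0 hx0
  have hyx : c*x ≤ x := by nlinarith
  have hyb : c*x < 0.525 := by nlinarith
  have hcy0 : 0 < cosh (c*x) := Real.cosh_pos _
  have hT2 := T2 (c*x) hy0.le
  have hyb2 : (c*x)^2 < 0.275625 := by nlinarith
  have hcoshy : cosh (c*x) < 3/2 := by
    nlinarith [mul_lt_mul_of_pos_right hyb2 hcy0]
  have hR := Rmono (c*x) x hy0.le hyx
  have h1 : cosh (c*x) - 1 < 3*c^2*x^2/4 := by nlinarith [mul_pos hy0 hy0]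
  have hc2 : c^2 ≤ 1/9 := by nlinarith
  have hx2 : 0 < x^2 := by positivity
  have h2 : (1-c^2)/2*x^2*(cosh (c*x) - 1) < (1-c^4)*x^4/24 := by
    have hm : 0 < (1-c^2)/2*x^2 := by nlinarith
    have := mul_lt_mul_of_pos_left h1 hm
    nlinarith [mul_pos hx2 hx2, sq_nonneg c, mul_nonneg (mul_nonneg (sq_nonneg c) (sq_nonneg c)) (mul_pos hx2 hx2).le]
  have key : (1-c^2)/2 * x^2 * cosh (c*x) < cosh x - cosh (c*x) := by nlinarith [hR, h2]
  have hfrac : 1 + (1-c^2)/2*x^2 < cosh x / cosh (c*x) := by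
    rw [lt_div_iff₀ hcy0]
    nlinarith [key]
  rw [div_lt_iff₀ hx2]
  nlinarith [hfrac]

theorem stmt_13 (p : ℕ) (hp : 3 ≤ p) (x : ℝ) (hx0 : 0 < x) (hx1 : x < π / 2) :
    4 / π ^ 2 * (1 - cosh (π / 2) / cosh (π / (2 * p))) < (1 - cosh x / cosh (x / p)) / x ^ 2 ∧
      (1 - cosh x / cosh (x / p)) / x ^ 2 < (1 - (p : ℝ) ^ 2) / (2 * (p : ℝ) ^ 2) := by
  have hp3 : (3:ℝ) ≤ (p:ℝ) := by exact_mod_cast hp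
  have hp0 : (0:ℝ) < (p:ℝ) := by linarith
  set c : ℝ := ((p:ℝ))⁻¹ with hcdef
  have hc0 : 0 < c := by positivity
  have hc3 : c ≤ 1/3 := by
    rw [hcdef]
    rw [inv_le_comm₀ (by linarith) (by norm_num)]
    simpa using hp3
  have hxp : x / (p:ℝ) = c * x := by rw [hcdef, div_eq_mul_inv, mul_comm]
  have hpne : (p:ℝ) ≠ 0 := hp0.ne'
  have hpip : π / (2*(p:ℝ)) = c * (π/2) := by
    rw [hcdef]; ring
  have hrhs : (1 - (p:ℝ)^2)/(2*(p:ℝ)^2) = (c^2-1)/2 := by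
    rw [hcdef, div_eq_div_iff (by positivity) (by norm_num : (2:ℝ) ≠ 0)]
    field_simp
  have hpi0 : (0:ℝ) < π := pi_pos
  have hlhs : 4 / π^2 * (1 - cosh (π/2) / cosh (π/(2*(p:ℝ)))) =
      (1 - cosh (π/2) / cosh (c*(π/2)))/(π/2)^2 := by
    rw [hpip]
    rw [div_pow, eq_div_iff (by positivity)]
    field_simp
    ring
  rw [hxp, hrhs, hlhs]
  exact ⟨partB c x hc0 hc3 hx0 hx1, partA c x hc0 hc3 hx0 hx1⟩
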